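/- There exists a constant C > 0 such that for all ν > 0, γ₀, γ₁ ∈ (0,1), γ₂ > 0, and 0 < t ≤ T with T = ν⁻¹γ₀²γ₁², the integral of h₁(t,·) over [0, ỹ(t)] (where ỹ(t) is the unique positive zero of h₁(t,·)) satisfies ∫₀^{ỹ(t)} h₁(t,y) dy ≥ −C·γ₂·νt/(γ₀⁴γ₁). -/

import Mathlib

open MeasureTheory Real Filter Set

noncomputable section

/-- The function `h₁(t,y) = γ₂·γ₁³·(4νt+γ₀²γ₁²)^{−3/2}·exp(−y²/(4νt+γ₀²γ₁²))
  − γ₂·γ₀^{−3}·exp(−y²/(γ₀²γ₁²))` from the proof of Proposition 2.4. -/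
def h1fun (ν γ₀ γ₁ γ₂ : ℝ) (t y : ℝ) : ℝ :=
  γ₂ * γ₁^3 / (Real.sqrt (4*ν*t + γ₀^2*γ₁^2))^3 * Real.exp (-y^2 / (4*ν*t + γ₀^2*γ₁^2))
    - γ₂ / γ₀^3 * Real.exp (-y^2 / (γ₀^2*γ₁^2))

/-- The unique positive zero `ỹ(t)` of `h₁(t,·)` (for `t > 0`). -/
def ytil (ν γ₀ γ₁ : ℝ) (t : ℝ) : ℝ :=
  Real.sqrt ((4*ν*t + γ₀^2*γ₁^2) * γ₀^2 * γ₁^2 / (4*ν*t)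
    * Real.log ((Real.sqrt (4*ν*t + γ₀^2*γ₁^2))^3 / (γ₀^3 * γ₁^3)))

set_option maxHeartbeats 1000000 in
/-- estimate of the integral of the negative part of `h₁`, proof of
Proposition 2.4. There is `C > 0` such that for all parameters and all
`0 < t ≤ T = ν⁻¹γ₀²γ₁²`, `∫₀^{ỹ(t)} h₁(t,y) dy ≥ −C·γ₂·νt/(γ₀⁴γ₁)`. -/
theorem h1_negative_part_integral :
    ∃ C : ℝ, 0 < C ∧ ∀ ν γ₀ γ₁ γ₂ t : ℝ, 0 < ν →
      γ₀ ∈ Set.Ioo (0:ℝ) 1 → γ₁ ∈ Set.Ioo (0:ℝ) 1 → 0 < γ₂ →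
      0 < t → t ≤ ν⁻¹ * γ₀^2 * γ₁^2 →
      -(C * γ₂ * ν * t / (γ₀^4 * γ₁))
        ≤ ∫ y in (0:ℝ)..(ytil ν γ₀ γ₁ t), h1fun ν γ₀ γ₁ γ₂ t y := by
  refine ⟨48, by norm_num, ?_⟩
  intro ν γ₀ γ₁ γ₂ t hν hγ₀ hγ₁ hγ₂ ht hT
  obtain ⟨hγ₀0, hγ₀1⟩ := hγ₀
  obtain ⟨hγ₁0, hγ₁1⟩ := hγ₁
  have hνt : 0 < ν * t := mul_pos hν ht
  have hνtb : ν * t ≤ γ₀^2 * γ₁^2 := by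
    have h := mul_le_mul_of_nonneg_left hT hν.le
    calc ν * t ≤ ν * (ν⁻¹ * γ₀^2 * γ₁^2) := h
      _ = γ₀^2 * γ₁^2 := by field_simp
  set b : ℝ := γ₀^2 * γ₁^2 with hbdef
  have hb0 : 0 < b := by positivity
  set a : ℝ := 4*ν*t + γ₀^2*γ₁^2 with hadef
  have ha0 : 0 < a := by positivity
  have hba : b ≤ a := by rw [hadef, hbdef]; nlinarith
  have ha5 : a ≤ 5*b := by rw [hadef, hbdef]; nlinarith
  have ha_eq : a = b + 4*(ν*t) := by rw [hadef, hbdef]; ring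
  set sa : ℝ := Real.sqrt a with hsadef
  have hsa0 : 0 < sa := Real.sqrt_pos.mpr ha0
  have hsa2 : sa^2 = a := Real.sq_sqrt ha0.le
  have hsbval : Real.sqrt b = γ₀ * γ₁ := by
    rw [hbdef, show γ₀^2 * γ₁^2 = (γ₀*γ₁)^2 by ring, Real.sqrt_sq (by positivity)]
  have hsab : γ₀ * γ₁ ≤ sa := by
    rw [← hsbval]; exact Real.sqrt_le_sqrt hba
  have hcube : (γ₀*γ₁)^3 ≤ sa^3 := pow_le_pow_left₀ (by positivity) hsab 3
  set M : ℝ := γ₂ / γ₀^3 - γ₂ * γ₁^3 / sa^3 with hMdef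
  -- M ≥ 0
  have hcoef : γ₂ * γ₁^3 / sa^3 ≤ γ₂ / γ₀^3 := by
    rw [div_le_div_iff₀ (by positivity) (by positivity)]
    nlinarith [mul_le_mul_of_nonneg_left hcube hγ₂.le]
  have hM0 : 0 ≤ M := by rw [hMdef]; linarith
  -- M ≤ 8 γ₂ ν t / (γ₀^5 γ₁^2)
  have hr : b^2 / a^2 ≤ γ₀^3 * γ₁^3 / sa^3 := by
    rw [div_le_div_iff₀ (by positivity) (by positivity)]
    have hb2 : b^2 = (γ₀*γ₁)^4 := by rw [hbdef]; ring
    have ha2 : a^2 = sa^4 := by rw [← hsa2]; ring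
    rw [hb2, ha2]
    nlinarith [mul_le_mul_of_nonneg_left hsab
      (show (0:ℝ) ≤ γ₀^3*γ₁^3*sa^3 by positivity)]
  have hMle : M ≤ 8 * γ₂ * ν * t / (γ₀^5 * γ₁^2) := by
    have h2 : 1 - b^2/a^2 ≤ 8*ν*t/b := by
      have heq : 1 - b^2/a^2 = (a^2 - b^2)/a^2 := by field_simp
      rw [heq, div_le_div_iff₀ (by positivity) hb0, ha_eq]
      nlinarith [mul_pos (mul_pos hνt hνt) hb0, mul_pos (mul_pos hνt hνt) hνt,
        mul_pos hνt (mul_pos hb0 hb0)]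
    have h1 : 1 - γ₀^3 * γ₁^3 / sa^3 ≤ 1 - b^2/a^2 := by linarith
    have hMeq : M = γ₂ / γ₀^3 * (1 - γ₀^3*γ₁^3/sa^3) := by
      rw [hMdef]; field_simp
    calc M = γ₂ / γ₀^3 * (1 - γ₀^3*γ₁^3/sa^3) := hMeq
      _ ≤ γ₂ / γ₀^3 * (8*ν*t/b) :=
          mul_le_mul_of_nonneg_left (le_trans h1 h2) (by positivity)
      _ = 8 * γ₂ * ν * t / (γ₀^5 * γ₁^2) := by rw [hbdef]; field_simp
  -- bound on ytil
  have hylb : 0 ≤ ytil ν γ₀ γ₁ t := Real.sqrt_nonneg _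
  have hyub : ytil ν γ₀ γ₁ t ≤ 6 * (γ₀ * γ₁) := by
    rw [ytil]
    have hbeq : b = (γ₀*γ₁)^2 := by rw [hbdef]; ring
    have harg : a * γ₀^2 * γ₁^2 / (4*ν*t)
        * Real.log (sa^3 / (γ₀^3 * γ₁^3)) ≤ (6*(γ₀*γ₁))^2 := by
      have hlog : Real.log (sa^3 / (γ₀^3*γ₁^3)) ≤ sa^3/(γ₀^3*γ₁^3) - 1 :=
        Real.log_le_sub_one_of_pos (by positivity)
      have hq : sa^3/(γ₀^3*γ₁^3) ≤ a^2/b^2 := by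
        rw [div_le_div_iff₀ (by positivity) (by positivity)]
        have hb2 : b^2 = (γ₀*γ₁)^4 := by rw [hbdef]; ring
        have ha2 : a^2 = sa^4 := by rw [← hsa2]; ring
        rw [hb2, ha2]
        nlinarith [mul_le_mul_of_nonneg_left hsab
          (show (0:ℝ) ≤ γ₀^3*γ₁^3*sa^3 by positivity)]
      have hq2 : a^2/b^2 - 1 ≤ 24*ν*t/b := by
        have heq : a^2/b^2 - 1 = (a^2 - b^2)/b^2 := by field_simp
        rw [heq, div_le_div_iff₀ (by positivity) hb0, ha_eq]
        nlinarith [mul_le_mul_of_nonneg_left hνtb (mul_pos hνt hb0).le,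
          mul_pos (mul_pos hνt hνt) hb0, mul_pos hνt (mul_pos hb0 hb0)]
      have hlog2 : Real.log (sa^3 / (γ₀^3*γ₁^3)) ≤ 24*ν*t/b := by linarith
      calc a * γ₀^2 * γ₁^2 / (4*ν*t) * Real.log (sa^3 / (γ₀^3 * γ₁^3))
          ≤ a * γ₀^2 * γ₁^2 / (4*ν*t) * (24*ν*t/b) :=
            mul_le_mul_of_nonneg_left hlog2 (by positivity)
        _ = 6 * a := by rw [hbdef]; field_simp; ring
        _ ≤ (6*(γ₀*γ₁))^2 := by nlinarith [ha5, hbeq]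
    calc Real.sqrt ((4*ν*t + γ₀^2*γ₁^2) * γ₀^2 * γ₁^2 / (4*ν*t)
          * Real.log ((Real.sqrt (4*ν*t + γ₀^2*γ₁^2))^3 / (γ₀^3 * γ₁^3)))
        ≤ Real.sqrt ((6*(γ₀*γ₁))^2) := Real.sqrt_le_sqrt harg
      _ = 6*(γ₀*γ₁) := Real.sqrt_sq (by positivity)
  -- pointwise lower bound
  have hptwise : ∀ y : ℝ, -M ≤ h1fun ν γ₀ γ₁ γ₂ t y := by
    intro y
    have hEa1 : Real.exp (-y^2 / a) ≤ 1 :=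
      Real.exp_le_one_iff.mpr (div_nonpos_iff.mpr (Or.inr ⟨neg_nonpos.mpr (sq_nonneg y), ha0.le⟩))
    have hEab : Real.exp (-y^2 / b) ≤ Real.exp (-y^2 / a) := by
      apply Real.exp_le_exp.mpr
      rw [neg_div, neg_div, neg_le_neg_iff]
      exact div_le_div_of_nonneg_left (sq_nonneg y) hb0 hba
    have key : γ₂*γ₁^3/sa^3 * (1 - Real.exp (-y^2/a))
        ≤ γ₂/γ₀^3 * (1 - Real.exp (-y^2/b)) :=
      mul_le_mul hcoef (by linarith) (by linarith) (by positivity)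
    show -M ≤ γ₂ * γ₁^3 / sa^3 * Real.exp (-y^2 / a) - γ₂ / γ₀^3 * Real.exp (-y^2 / b)
    rw [hMdef]
    nlinarith [key]
  -- integrate
  have hcont : Continuous (h1fun ν γ₀ γ₁ γ₂ t) := by
    unfold h1fun; fun_prop
  have hint : ∫ y in (0:ℝ)..(ytil ν γ₀ γ₁ t), (-M)
      ≤ ∫ y in (0:ℝ)..(ytil ν γ₀ γ₁ t), h1fun ν γ₀ γ₁ γ₂ t y := by
    apply intervalIntegral.integral_mono_on hylb intervalIntegrable_const
      (hcont.intervalIntegrable _ _)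
    exact fun y _ => hptwise y
  rw [intervalIntegral.integral_const, smul_eq_mul] at hint
  refine le_trans ?_ hint
  have key : (ytil ν γ₀ γ₁ t) * M ≤ 48 * γ₂ * ν * t / (γ₀^4 * γ₁) := by
    calc (ytil ν γ₀ γ₁ t) * M ≤ 6*(γ₀*γ₁) * M :=
          mul_le_mul_of_nonneg_right hyub hM0
      _ ≤ 6*(γ₀*γ₁) * (8 * γ₂ * ν * t / (γ₀^5 * γ₁^2)) :=
          mul_le_mul_of_nonneg_left hMle (by positivity)
      _ = 48 * γ₂ * ν * t / (γ₀^4 * γ₁) := by field_simp; ring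
  nlinarith [key]
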